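/- Let a > b > 0 and Z_i^n as above (Z_1^n with parameter 1 − ρ_1^{(n)}, ρ_1^{(n)} = (1 − an^{−3/2} + bn^{−1/2})(1 − an^{−3/2})^{n−1}; Z_i^n with parameter 1 − (1 − an^{−3/2})^{n−i+1} for i ≥ 2; all independent). Then E[(1/n)·Σ_{i=1}^n (n−i+1)·Z_i^n] / (n^{3/2}/a) → 1 as n → ∞. -/

import Mathlib

open Filter Finset MeasureTheory
open scoped ENNReal

lemma bern_low (ε : ℝ) (hε : ε ≤ 2) (k : ℕ) : 1 - (k:ℝ)*ε ≤ (1-ε)^k := by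
  have h := one_add_mul_le_pow (by linarith : (-2:ℝ) ≤ -ε) k
  rw [show (1:ℝ) + -ε = 1 - ε from by ring] at h
  linarith

lemma bern_up (ε : ℝ) (hε0 : 0 < ε) (hε1 : ε < 1) (k : ℕ) :
    (1-ε)^k ≤ 1/(1+(k:ℝ)*ε) := by
  have hb := one_add_mul_le_pow (by linarith : (-2:ℝ) ≤ ε) k
  have hqk : (0:ℝ) ≤ (1-ε)^k := pow_nonneg (by linarith) k
  have h1 : (1-ε)^k * (1+(k:ℝ)*ε) ≤ (1-ε)^k * (1+ε)^k :=
    mul_le_mul_of_nonneg_left hb hqk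
  have h2 : (1-ε)^k*(1+ε)^k = (1-ε^2)^k := by rw [← mul_pow]; ring_nf
  have h3 : (1-ε^2)^k ≤ 1 := pow_le_one₀ (by nlinarith) (by nlinarith)
  rw [le_div_iff₀ (by positivity)]
  nlinarith

lemma kbound (ε B : ℝ) (hε0 : 0 < ε) (hε1 : ε < 1)
    (k : ℕ) (hk : 1 ≤ k) (hkB : (k:ℝ)*ε ≤ B) :
    (1 - B)/ε ≤ (k:ℝ) * ((1-ε)^k / (1 - (1-ε)^k)) ∧
      (k:ℝ) * ((1-ε)^k / (1 - (1-ε)^k)) ≤ (1 + B)/ε := by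
  have hq0 : (0:ℝ) ≤ 1 - ε := by linarith
  have hqk0 : (0:ℝ) ≤ (1-ε)^k := pow_nonneg hq0 k
  have hqk1 : (1-ε)^k < 1 := pow_lt_one₀ hq0 (by linarith) (by omega)
  have hden : (0:ℝ) < 1 - (1-ε)^k := by linarith
  have hlow : 1 - (k:ℝ)*ε ≤ (1-ε)^k := bern_low ε (by linarith) k
  have hup : (1-ε)^k * (1 + (k:ℝ)*ε) ≤ 1 := by
    have h := bern_up ε hε0 hε1 k
    rw [le_div_iff₀ (by positivity)] at h; exact h
  have hk1 : (1:ℝ) ≤ (k:ℝ) := by exact_mod_cast hk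
  have hkε : (0:ℝ) < (k:ℝ)*ε := by positivity
  have hB0 : 0 < B := lt_of_lt_of_le hkε hkB
  constructor
  · rw [← mul_div_assoc, div_le_div_iff₀ hε0 hden]
    have hm := mul_le_mul (show 1-B ≤ (1-ε)^k by linarith)
      (show 1-(1-ε)^k ≤ (k:ℝ)*ε by linarith) hden.le hqk0
    nlinarith
  · rw [← mul_div_assoc, div_le_div_iff₀ hden hε0]
    nlinarith

lemma geomExp {Ω : Type*} [MeasurableSpace Ω] (μ : Measure Ω) [IsProbabilityMeasure μ]
    (X : Ω → ℕ) (hX : Measurable X) (r : ℝ) (hr0 : 0 ≤ r) (hr1 : r < 1)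
    (h : ∀ m : ℕ, μ {ω | m ≤ X ω} = ENNReal.ofReal (r ^ m)) :
    Integrable (fun ω => (X ω : ℝ)) μ ∧ ∫ ω, (X ω : ℝ) ∂μ = r / (1 - r) := by
  have key : ∀ k : ℕ, (k : ℝ≥0∞) = ∑' m : ℕ, Set.indicator {j : ℕ | j < k} (fun _ => (1:ℝ≥0∞)) m := by
    intro k
    rw [tsum_eq_sum (s := Finset.range k) (by
      intro m hm
      simp only [Set.indicator_apply, Set.mem_setOf_eq, ite_eq_right_iff]
      intro hlt; exact absurd (Finset.mem_range.2 hlt) hm)]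
    simp only [Set.indicator_apply, Set.mem_setOf_eq]
    rw [Finset.sum_ite_of_true (fun m hm => Finset.mem_range.1 hm)]
    simp
  have hsets : ∀ m : ℕ, MeasurableSet {ω | m < X ω} := fun m =>
    hX (measurableSet_Ioi (a := m))
  have hlin : ∫⁻ ω, (X ω : ℝ≥0∞) ∂μ = ENNReal.ofReal (r / (1 - r)) := by
    have : ∀ ω, (X ω : ℝ≥0∞) = ∑' m : ℕ, Set.indicator {ω' | m < X ω'} (fun _ => (1:ℝ≥0∞)) ω := by
      intro ω
      rw [key (X ω)]
      congr 1
    calc ∫⁻ ω, (X ω : ℝ≥0∞) ∂μ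
        = ∫⁻ ω, ∑' m : ℕ, Set.indicator {ω' | m < X ω'} (fun _ => (1:ℝ≥0∞)) ω ∂μ := by
          exact lintegral_congr this
      _ = ∑' m : ℕ, ∫⁻ ω, Set.indicator {ω' | m < X ω'} (fun _ => (1:ℝ≥0∞)) ω ∂μ := by
          refine lintegral_tsum fun m => ?_
          exact (measurable_const.indicator (hsets m)).aemeasurable
      _ = ∑' m : ℕ, μ {ω | m < X ω} := by
          refine tsum_congr fun m => ?_
          exact lintegral_indicator_one (hsets m)
      _ = ∑' m : ℕ, ENNReal.ofReal (r ^ (m+1)) := by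
          refine tsum_congr fun m => ?_
          have : {ω : Ω | m < X ω} = {ω : Ω | m + 1 ≤ X ω} := Set.ext fun ω => Nat.lt_iff_add_one_le
          rw [this, h (m+1)]
      _ = ENNReal.ofReal (r / (1 - r)) := by
          rw [← ENNReal.ofReal_tsum_of_nonneg (fun m => pow_nonneg hr0 _)]
          · congr 1
            have : ∀ m : ℕ, r ^ (m+1) = r * r ^ m := fun m => by ring
            simp_rw [this]
            rw [tsum_mul_left, tsum_geometric_of_lt_one hr0 hr1]
            field_simp
          · exact (summable_geometric_of_lt_one hr0 hr1).mul_left r |>.congr (fun m => by ring)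
  have hne : ENNReal.ofReal (r / (1 - r)) ≠ ⊤ := ENNReal.ofReal_ne_top
  have hint : Integrable (fun ω => (X ω : ℝ)) μ := by
    refine ⟨(measurable_from_top.comp hX :
      Measurable fun ω => (X ω : ℝ)).aestronglyMeasurable, ?_⟩
    show (∫⁻ ω, (‖(X ω : ℝ)‖₊ : ℝ≥0∞) ∂μ) < ⊤
    have : ∀ ω, (‖(X ω : ℝ)‖₊ : ℝ≥0∞) = (X ω : ℝ≥0∞) := by
      intro ω; simp [Real.nnnorm_natCast]
    simp_rw [this, hlin]
    exact hne.lt_top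
  refine ⟨hint, ?_⟩
  rw [integral_eq_lintegral_of_nonneg_ae (Filter.Eventually.of_forall fun ω => Nat.cast_nonneg _)
    hint.aestronglyMeasurable]
  simp_rw [ENNReal.ofReal_natCast, hlin]
  rw [ENNReal.toReal_ofReal (div_nonneg hr0 (by linarith))]

lemma halg1 (N t A S : ℝ) (hN : N ≠ 0) (ht : t ≠ 0) (hA : A ≠ 0) :
    ((1/N)*S)/((N*t)/A) = S * (A/(N*(N*t))) := by
  field_simp

lemma halg2 (N t A : ℝ) (hN : N ≠ 0) (ht : t ≠ 0) (hA : A ≠ 0) :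
    (N-1)/N*(1-A/t) = ((N-1)*((1-A/t)*(N*t)/A))*(A/(N*(N*t))) := by
  field_simp

lemma halg3 (N t A B D : ℝ) (hN : N ≠ 0) (ht : t ≠ 0) (hA : A ≠ 0) (hD : D ≠ 0) :
    (N * ((1+B/t)*(N*t)/D) + (N-1)*((1+A/t)*(N*t)/A)) * (A/(N*(N*t)))
      = (N-1)/N*(1+A/t) + A*(1+B/t)/D := by
  field_simp
  ring

/-- Traffic intensities of the Jackson network representing the gaps of the
`n`-server marginal-JSQ system with pauses. -/
noncomputable def jacksonRho (a b : ℝ) (n i : ℕ) : ℝ :=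
  if i = 1 then
    (1 - a / (n : ℝ) ^ ((3 : ℝ) / 2) + b / Real.sqrt n)
      * (1 - a / (n : ℝ) ^ ((3 : ℝ) / 2)) ^ (n - 1)
  else (1 - a / (n : ℝ) ^ ((3 : ℝ) / 2)) ^ (n - i + 1)

set_option maxHeartbeats 1000000 in
/-- Asymptotics of the expected average queue length
`E[(1/n) Σ_{i=1}^n (n−i+1) Z_i^n] / (n^{3/2}/a) → 1`. -/
theorem expected_average_queue_length_asymptotics
    (a b : ℝ) (hb : 0 < b) (hab : b < a)
    {Ω : Type*} [MeasurableSpace Ω] (μ : Measure Ω) [IsProbabilityMeasure μ]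
    (Z : ℕ → ℕ → Ω → ℕ)
    (hmeas : ∀ n i, Measurable (Z n i))
    (htail : ∀ n, 1 ≤ n → ∀ i ∈ Icc 1 n, ∀ m : ℕ,
      μ {ω | m ≤ Z n i ω} = ENNReal.ofReal (jacksonRho a b n i ^ m)) :
    Tendsto
      (fun n : ℕ =>
        (∫ ω, (1 / (n : ℝ)) * ∑ i ∈ Icc 1 n, ((n : ℝ) - i + 1) * (Z n i ω : ℝ) ∂μ)
          / ((n : ℝ) ^ ((3 : ℝ) / 2) / a))
      atTop (nhds 1) := by
  have ha : 0 < a := hb.trans hab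
  have hptend : Tendsto (fun n : ℕ => (n:ℝ) ^ ((3:ℝ)/2)) atTop atTop :=
    (tendsto_rpow_atTop (by norm_num)).comp tendsto_natCast_atTop_atTop
  have hstend : Tendsto (fun n : ℕ => Real.sqrt n) atTop atTop := by
    have h : Tendsto Real.sqrt atTop atTop := by
      rw [show Real.sqrt = fun x : ℝ => x ^ ((1:ℝ)/2) from funext Real.sqrt_eq_rpow]
      exact tendsto_rpow_atTop (by norm_num)
    exact h.comp tendsto_natCast_atTop_atTop
  have hdent : Tendsto (fun n : ℕ => (a - b) * (n:ℝ) - a) atTop atTop := by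
    have := tendsto_atTop_add_const_right atTop (-a)
      (tendsto_natCast_atTop_atTop.const_mul_atTop (by linarith : (0:ℝ) < a - b))
    simpa [sub_eq_add_neg] using this
  have ev1 : ∀ᶠ n : ℕ in atTop, 2 ≤ n := eventually_ge_atTop 2
  have ev2 : ∀ᶠ n : ℕ in atTop, a < (n:ℝ) ^ ((3:ℝ)/2) := hptend.eventually_gt_atTop a
  have ev3 : ∀ᶠ n : ℕ in atTop, a ≤ Real.sqrt n := hstend.eventually_ge_atTop a
  have ev4 : ∀ᶠ n : ℕ in atTop, 0 < (a - b) * (n:ℝ) - a := hdent.eventually_gt_atTop 0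
  -- the per-n estimates
  have main : ∀ n : ℕ, 2 ≤ n → a < (n:ℝ) ^ ((3:ℝ)/2) → a ≤ Real.sqrt n →
      0 < (a - b) * (n:ℝ) - a →
      ((n:ℝ)-1)/n * (1 - a/Real.sqrt n) ≤
        (∫ ω, (1 / (n : ℝ)) * ∑ i ∈ Icc 1 n, ((n : ℝ) - i + 1) * (Z n i ω : ℝ) ∂μ)
          / ((n : ℝ) ^ ((3 : ℝ) / 2) / a) ∧
      (∫ ω, (1 / (n : ℝ)) * ∑ i ∈ Icc 1 n, ((n : ℝ) - i + 1) * (Z n i ω : ℝ) ∂μ)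
          / ((n : ℝ) ^ ((3 : ℝ) / 2) / a) ≤
        ((n:ℝ)-1)/n * (1 + a/Real.sqrt n) + a*(1 + b/Real.sqrt n)/((a-b)*(n:ℝ)-a) := by
    intro n hn2 hna hsa hD
    have hn0 : (0:ℝ) < n := by exact_mod_cast Nat.lt_of_lt_of_le (by norm_num) hn2
    have hn2' : (2:ℝ) ≤ n := by exact_mod_cast hn2
    set s : ℝ := Real.sqrt n with hsdef
    have hs0 : (0:ℝ) < s := Real.sqrt_pos.2 hn0
    set p : ℝ := (n:ℝ) ^ ((3:ℝ)/2) with hpdef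
    have hp0 : 0 < p := ha.trans hna
    have hpns : p = n * s := by
      rw [hpdef, hsdef, Real.sqrt_eq_rpow, show ((3:ℝ)/2) = 1 + 1/2 by norm_num,
        Real.rpow_add hn0, Real.rpow_one]
    set ε : ℝ := a / p with hεdef
    have hε0 : 0 < ε := div_pos ha hp0
    have hε1 : ε < 1 := (div_lt_one hp0).2 hna
    have hq0 : (0:ℝ) ≤ 1 - ε := by linarith
    have hnε : (n:ℝ) * ε = a / s := by
      rw [hεdef, hpns]; field_simp
    have hB1 : a / s ≤ 1 := (div_le_one hs0).2 hsa
    -- values of jacksonRho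
    have hval : ∀ i : ℕ, 2 ≤ i → jacksonRho a b n i = (1 - ε)^(n - i + 1) := by
      intro i hi
      unfold jacksonRho
      rw [if_neg (by omega), ← hpdef, ← hεdef]
    have hval1 : jacksonRho a b n 1 = (1 - ε + b/s) * (1 - ε)^(n-1) := by
      unfold jacksonRho
      rw [if_pos rfl, ← hpdef, ← hsdef, ← hεdef]
    -- the i = 1 term
    have hm : ((n-1:ℕ):ℝ) = (n:ℝ) - 1 := by
      rw [Nat.cast_sub (by omega), Nat.cast_one]
    have hqn1 : (1-ε)^(n-1) ≤ 1/(1+((n:ℝ)-1)*ε) := by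
      have := bern_up ε hε0 hε1 (n-1); rwa [hm] at this
    have hbs0 : 0 < b / s := div_pos hb hs0
    have hkey : b/s < ((n:ℝ)-1)*ε := by
      rw [hεdef, hpns, mul_div_assoc']
      rw [div_lt_div_iff₀ hs0 (mul_pos hn0 hs0)]
      nlinarith [mul_pos hs0 hD]
    set r1 : ℝ := (1 - ε + b/s) * (1 - ε)^(n-1) with hr1def
    have hr1_0 : 0 ≤ r1 := mul_nonneg (by linarith) (pow_nonneg hq0 _)
    have hr1_le : r1 ≤ (1+b/s)/(1+((n:ℝ)-1)*ε) := by
      calc r1 ≤ (1+b/s)*(1/(1+((n:ℝ)-1)*ε)) := by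
            refine mul_le_mul (by linarith) hqn1 (pow_nonneg hq0 _) (by positivity)
        _ = (1+b/s)/(1+((n:ℝ)-1)*ε) := mul_one_div _ _
    have hmε0 : 0 < ((n:ℝ)-1)*ε := mul_pos (by linarith) hε0
    have hP1 : (1+b/s)/(1+((n:ℝ)-1)*ε) < 1 := (div_lt_one (by positivity)).2 (by linarith)
    have hr1_lt : r1 < 1 := hr1_le.trans_lt hP1
    have hEden : 0 < 1 - r1 := by linarith
    have hden2 : 0 < ((n:ℝ)-1)*ε - b/s := by linarith
    have hE1 : r1/(1-r1) ≤ (1+b/s)/(((n:ℝ)-1)*ε - b/s) := by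
      have h2 : r1/(1-r1) ≤
          ((1+b/s)/(1+((n:ℝ)-1)*ε))/(1 - (1+b/s)/(1+((n:ℝ)-1)*ε)) :=
        div_le_div₀ (by positivity) hr1_le (by linarith) (by linarith)
      have heq : (1 - (1+b/s)/(1+((n:ℝ)-1)*ε)) = (((n:ℝ)-1)*ε - b/s)/(1+((n:ℝ)-1)*ε) := by
        field_simp
        ring
      rw [heq, div_div_div_comm, div_self (by positivity : ((1:ℝ)+((n:ℝ)-1)*ε) ≠ 0), div_one] at h2
      exact h2
    -- rho in [0,1)
    have hrho_mem : ∀ i ∈ Icc 1 n, 0 ≤ jacksonRho a b n i ∧ jacksonRho a b n i < 1 := by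
      intro i hi
      rw [mem_Icc] at hi
      by_cases h1 : i = 1
      · subst h1; rw [hval1]; exact ⟨hr1_0, hr1_lt⟩
      · rw [hval i (by omega)]
        exact ⟨pow_nonneg hq0 _, pow_lt_one₀ hq0 (by linarith) (by omega)⟩
    have hZ : ∀ i ∈ Icc 1 n, Integrable (fun ω => (Z n i ω : ℝ)) μ ∧
        ∫ ω, (Z n i ω : ℝ) ∂μ = jacksonRho a b n i / (1 - jacksonRho a b n i) :=
      fun i hi => geomExp μ (Z n i) (hmeas n i) _ (hrho_mem i hi).1 (hrho_mem i hi).2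
        (htail n (by omega) i hi)
    set S : ℝ := ∑ i ∈ Icc 1 n, ((n:ℝ) - i + 1) * (jacksonRho a b n i/(1 - jacksonRho a b n i))
      with hSdef
    have hIeq : (∫ ω, (1/(n:ℝ)) * ∑ i ∈ Icc 1 n, ((n:ℝ) - i + 1) * (Z n i ω : ℝ) ∂μ)
        = (1/(n:ℝ)) * S := by
      rw [integral_const_mul]
      congr 1
      rw [integral_finset_sum _ (fun i hi => ((hZ i hi).1.const_mul _))]
      exact Finset.sum_congr rfl fun i hi => by rw [integral_const_mul, (hZ i hi).2]
    -- splitting the sum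
    have h1mem : (1:ℕ) ∉ Icc 2 n := by simp
    have hsplit : Icc 1 n = insert 1 (Icc 2 n) := by
      ext j; simp only [mem_Icc, mem_insert]; omega
    have hSsplit : S = (n:ℝ) * (r1/(1-r1)) +
        ∑ i ∈ Icc 2 n, ((n:ℝ) - i + 1) * (jacksonRho a b n i/(1 - jacksonRho a b n i)) := by
      rw [hSdef, hsplit, Finset.sum_insert h1mem, hval1]
      push_cast
      ring
    -- per-term bounds for i ≥ 2
    have hterm : ∀ i ∈ Icc 2 n,
        (1 - a/s)/ε ≤ ((n:ℝ) - i + 1) * (jacksonRho a b n i/(1 - jacksonRho a b n i)) ∧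
        ((n:ℝ) - i + 1) * (jacksonRho a b n i/(1 - jacksonRho a b n i)) ≤ (1 + a/s)/ε := by
      intro i hi
      rw [mem_Icc] at hi
      have hcast : ((n - i + 1 : ℕ):ℝ) = (n:ℝ) - i + 1 := by
        rw [Nat.cast_add, Nat.cast_sub (by omega), Nat.cast_one]
      have hkB : ((n - i + 1 : ℕ):ℝ) * ε ≤ a/s := by
        rw [← hnε]
        have h1 : ((n - i + 1 : ℕ):ℝ) ≤ (n:ℝ) := by
          rw [hcast]
          have : (2:ℝ) ≤ (i:ℝ) := by exact_mod_cast hi.1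
          linarith
        exact mul_le_mul_of_nonneg_right h1 hε0.le
      rw [hval i hi.1, ← hcast]
      exact kbound ε (a/s) hε0 hε1 (n - i + 1) (by omega) hkB
    have hcard : (((Icc 2 n).card : ℕ):ℝ) = (n:ℝ) - 1 := by
      rw [Nat.card_Icc, show n + 1 - 2 = n - 1 from by omega, Nat.cast_sub (by omega),
        Nat.cast_one]
    have hsum_up : ∑ i ∈ Icc 2 n, ((n:ℝ) - i + 1) * (jacksonRho a b n i/(1 - jacksonRho a b n i))
        ≤ ((n:ℝ)-1) * ((1 + a/s)/ε) := by
      have h := Finset.sum_le_card_nsmul (Icc 2 n) _ _ (fun i hi => (hterm i hi).2)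
      rwa [nsmul_eq_mul, hcard] at h
    have hsum_low : ((n:ℝ)-1) * ((1 - a/s)/ε) ≤
        ∑ i ∈ Icc 2 n, ((n:ℝ) - i + 1) * (jacksonRho a b n i/(1 - jacksonRho a b n i)) := by
      have h := Finset.card_nsmul_le_sum (Icc 2 n) _ _ (fun i hi => (hterm i hi).1)
      rwa [nsmul_eq_mul, hcard] at h
    -- conversions of the bound constants
    have hLeq : (1 - a/s)/ε = (1 - a/s)*((n:ℝ)*s)/a := by
      rw [hεdef, hpns, div_div_eq_mul_div]
    have hUeq : (1 + a/s)/ε = (1 + a/s)*((n:ℝ)*s)/a := by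
      rw [hεdef, hpns, div_div_eq_mul_div]
    have hDeq : ((n:ℝ)-1)*ε - b/s = ((a-b)*(n:ℝ)-a)/((n:ℝ)*s) := by
      rw [hεdef, hpns]; field_simp; ring
    have hE1' : (n:ℝ) * (r1/(1-r1)) ≤ (n:ℝ) * ((1+b/s)*((n:ℝ)*s)/((a-b)*(n:ℝ)-a)) := by
      have h := hE1
      rw [hDeq, div_div_eq_mul_div] at h
      exact mul_le_mul_of_nonneg_left h hn0.le
    have hT1pos : 0 ≤ (n:ℝ) * (r1/(1-r1)) :=
      mul_nonneg hn0.le (div_nonneg hr1_0 hEden.le)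
    -- total bounds on S
    have hSlow : ((n:ℝ)-1) * ((1 - a/s)*((n:ℝ)*s)/a) ≤ S := by
      rw [hSsplit]
      have h := hsum_low; rw [hLeq] at h
      linarith
    have hSup : S ≤ (n:ℝ) * ((1+b/s)*((n:ℝ)*s)/((a-b)*(n:ℝ)-a))
        + ((n:ℝ)-1) * ((1 + a/s)*((n:ℝ)*s)/a) := by
      rw [hSsplit]
      have h := hsum_up; rw [hUeq] at h
      linarith
    -- final comparison
    have hFeq : ((1/(n:ℝ))*S)/(p/a) = S * (a/((n:ℝ)*((n:ℝ)*s))) := by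
      rw [hpns]; exact halg1 n s a S hn0.ne' hs0.ne' ha.ne'
    rw [hIeq, hFeq]
    constructor
    · calc ((n:ℝ)-1)/n * (1 - a/s)
          = (((n:ℝ)-1) * ((1 - a/s)*((n:ℝ)*s)/a)) * (a/((n:ℝ)*((n:ℝ)*s))) :=
            halg2 n s a hn0.ne' hs0.ne' ha.ne'
        _ ≤ S * (a/((n:ℝ)*((n:ℝ)*s))) :=
            mul_le_mul_of_nonneg_right hSlow (by positivity)
    · calc S * (a/((n:ℝ)*((n:ℝ)*s)))
          ≤ ((n:ℝ) * ((1+b/s)*((n:ℝ)*s)/((a-b)*(n:ℝ)-a))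
              + ((n:ℝ)-1) * ((1 + a/s)*((n:ℝ)*s)/a)) * (a/((n:ℝ)*((n:ℝ)*s))) :=
            mul_le_mul_of_nonneg_right hSup (by positivity)
        _ = ((n:ℝ)-1)/n * (1 + a/s) + a*(1 + b/s)/((a-b)*(n:ℝ)-a) :=
            halg3 n s a b _ hn0.ne' hs0.ne' ha.ne' hD.ne'
  -- limits of the bounding functions
  have hql : Tendsto (fun n : ℕ => ((n:ℝ)-1)/n) atTop (nhds 1) := by
    have h : Tendsto (fun n : ℕ => 1 - 1/(n:ℝ)) atTop (nhds (1 - 0)) :=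
      tendsto_const_nhds.sub tendsto_one_div_atTop_nhds_zero_nat
    rw [sub_zero] at h
    refine h.congr' ?_
    filter_upwards [eventually_ge_atTop 1] with n hn
    have hn0 : (n:ℝ) ≠ 0 := Nat.cast_ne_zero.2 (by omega)
    field_simp
  have hsa0 : Tendsto (fun n : ℕ => a/Real.sqrt n) atTop (nhds 0) :=
    tendsto_const_nhds.div_atTop hstend
  have hsb0 : Tendsto (fun n : ℕ => b/Real.sqrt n) atTop (nhds 0) :=
    tendsto_const_nhds.div_atTop hstend
  have hlast : Tendsto (fun n : ℕ => a*(1 + b/Real.sqrt n)/((a-b)*(n:ℝ)-a)) atTop (nhds 0) :=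
    Filter.Tendsto.div_atTop ((tendsto_const_nhds : Filter.Tendsto (fun _ : ℕ => a) atTop (nhds a)).mul ((tendsto_const_nhds : Filter.Tendsto (fun _ : ℕ => (1:ℝ)) atTop (nhds 1)).add hsb0)) hdent
  have hlo_t : Tendsto (fun n : ℕ => ((n:ℝ)-1)/n * (1 - a/Real.sqrt n)) atTop (nhds 1) := by
    have := hql.mul ((tendsto_const_nhds : Filter.Tendsto (fun _ : ℕ => (1:ℝ)) atTop (nhds 1)).sub hsa0)
    simpa using this
  have hhi_t : Tendsto (fun n : ℕ => ((n:ℝ)-1)/n * (1 + a/Real.sqrt n)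
      + a*(1 + b/Real.sqrt n)/((a-b)*(n:ℝ)-a)) atTop (nhds 1) := by
    have := (hql.mul ((tendsto_const_nhds : Filter.Tendsto (fun _ : ℕ => (1:ℝ)) atTop (nhds 1)).add hsa0)).add hlast
    simpa using this
  refine tendsto_of_tendsto_of_tendsto_of_le_of_le' hlo_t hhi_t ?_ ?_
  · filter_upwards [ev1, ev2, ev3, ev4] with n h1 h2 h3 h4
    exact (main n h1 h2 h3 h4).1
  · filter_upwards [ev1, ev2, ev3, ev4] with n h1 h2 h3 h4
    exact (main n h1 h2 h3 h4).2
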